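/- Fix design points 0 ≤ x₁ < ⋯ < xₙ ≤ 1 and data Y₁,…,Yₙ ∈ ℝ. For every m ∈ [0,1], the function f ↦ Σᵢ (Yᵢ − f(xᵢ))² attains its infimum over the class F^m of functions [0,1] → ℝ that are convex on [0,m], concave on [m,1], and non-decreasing on [0,1]; moreover any two minimizers agree at x₁,…,xₙ. -/

import Mathlib

open Finset Set

namespace SShape

variable (t : ℕ → ℝ) (m : ℝ) (n : ℕ)

/-- slope of the chord of `v` between indices `i < j`. -/
noncomputable def sl (v : ℕ → ℝ) (i j : ℕ) : ℝ := (v j - v i) / (t j - t i)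

/-- value at `m` of the line through `(t i, v i)` and `(t j, v j)`. -/
noncomputable def ch (v : ℕ → ℝ) (i j : ℕ) : ℝ := v i + sl t v i j * (m - t i)

/-- Polyhedral description of achievable value vectors. -/
def P (v : ℕ → ℝ) : Prop :=
  (∀ j k, j ≤ k → k < n → v j ≤ v k) ∧
  (∀ i j k, i < j → j < k → k < n → t k ≤ m → sl t v i j ≤ sl t v j k) ∧
  (∀ i j k, i < j → j < k → k < n → m ≤ t i → sl t v j k ≤ sl t v i j) ∧
  (∀ i j k, i < j → j < n → t j ≤ m → k < n → m ≤ t k → ch t m v i j ≤ v k) ∧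
  (∀ i k l, i < n → t i ≤ m → k < l → l < n → m ≤ t k → v i ≤ ch t m v k l) ∧
  (∀ i j k l, i < j → j < n → t j ≤ m → k < l → l < n → m ≤ t k →
    ch t m v i j ≤ ch t m v k l)

variable {t m n}

theorem sl_mul {v : ℕ → ℝ} {i j : ℕ} (h : t i < t j) :
    sl t v i j * (t j - t i) = v j - v i :=
  div_mul_cancel₀ _ (sub_ne_zero.2 (ne_of_gt h))

/-- the line through `i,j` anchored at `j` instead of `i`. -/
theorem line_anchor {v : ℕ → ℝ} {i j : ℕ} (h : t i < t j) (y : ℝ) :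
    v i + sl t v i j * (y - t i) = v j + sl t v i j * (y - t j) := by
  have h1 := sl_mul (v := v) h
  have h2 : sl t v i j * (y - t i) - sl t v i j * (y - t j)
      = sl t v i j * (t j - t i) := by ring
  linarith

section Forward
set_option linter.unusedSectionVars false

variable (hts : ∀ ⦃j k⦄, j < k → k < n → t j < t k)
  (ht0 : ∀ j, j < n → 0 ≤ t j) (ht1 : ∀ j, j < n → t j ≤ 1)
  (hm0 : 0 ≤ m) (hm1 : m ≤ 1)
  {f : ℝ → ℝ}
  (hcv : ConvexOn ℝ (Set.Icc 0 m) f) (hcc : ConcaveOn ℝ (Set.Icc m 1) f)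
  (hmo : MonotoneOn f (Set.Icc (0:ℝ) 1))

include hts ht0 ht1 hm0 hm1 hcv hcc hmo

/-- the convex extension bound: a chord inside `[0,m]` extended to `m` lies below `f m`. -/
theorem chord_le_fm {i j : ℕ} (hij : i < j) (hj : j < n) (hjm : t j ≤ m) :
    ch t m (fun l => f (t l)) i j ≤ f m := by
  have hi : i < n := hij.trans hj
  have htij : t i < t j := hts hij hj
  have key : sl t (fun l => f (t l)) i j * (t j - t i) = f (t j) - f (t i) :=
    sl_mul htij
  have hsl : sl t (fun l => f (t l)) i j = (f (t j) - f (t i)) / (t j - t i) := rfl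
  show f (t i) + sl t (fun l => f (t l)) i j * (m - t i) ≤ f m
  rcases eq_or_lt_of_le hjm with he | hlt
  · rw [← he]; linarith
  · have hs := hcv.slope_mono_adjacent (x := t i) (y := t j) (z := m)
      ⟨ht0 i hi, le_of_lt (htij.trans hlt)⟩ ⟨hm0, le_refl m⟩ htij hlt
    rw [← hsl] at hs
    have hpos : (0:ℝ) < m - t j := by linarith
    have h2 : (f m - f (t j)) / (m - t j) * (m - t j) = f m - f (t j) :=
      div_mul_cancel₀ _ (ne_of_gt hpos)
    have h3 := mul_le_mul_of_nonneg_right hs (le_of_lt hpos)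
    nlinarith

/-- the concave extension bound: a chord inside `[m,1]` extended back to `m` lies above `f m`. -/
theorem fm_le_chord {k l : ℕ} (hkl : k < l) (hl : l < n) (hkm : m ≤ t k) :
    f m ≤ ch t m (fun i => f (t i)) k l := by
  have hk : k < n := hkl.trans hl
  have htkl : t k < t l := hts hkl hl
  have hsl : sl t (fun i => f (t i)) k l = (f (t l) - f (t k)) / (t l - t k) := rfl
  show f m ≤ f (t k) + sl t (fun i => f (t i)) k l * (m - t k)
  rcases eq_or_lt_of_le hkm with he | hlt
  · rw [← he]; simp
  · have hs := hcc.slope_anti_adjacent (x := m) (y := t k) (z := t l)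
      ⟨le_refl m, hm1⟩ ⟨le_of_lt (hlt.trans htkl), ht1 l hl⟩ hlt htkl
    rw [← hsl] at hs
    have hpos : (0:ℝ) < t k - m := by linarith
    have h2 : (f (t k) - f m) / (t k - m) * (t k - m) = f (t k) - f m :=
      div_mul_cancel₀ _ (ne_of_gt hpos)
    have h3 := mul_le_mul_of_nonneg_right hs (le_of_lt hpos)
    nlinarith

theorem forward : P t m n (fun j => f (t j)) := by
  have hmem : ∀ j, j < n → t j ∈ Set.Icc (0:ℝ) 1 := fun j hj => ⟨ht0 j hj, ht1 j hj⟩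
  have hmono : ∀ j k, j ≤ k → k < n → f (t j) ≤ f (t k) := by
    intro j k hjk hk
    rcases eq_or_lt_of_le hjk with rfl | h
    · exact le_refl _
    · exact hmo (hmem j (h.trans hk)) (hmem k hk) (le_of_lt (hts h hk))
  have hfm_mem : m ∈ Set.Icc (0:ℝ) 1 := ⟨hm0, hm1⟩
  refine ⟨hmono, ?_, ?_, ?_, ?_, ?_⟩
  · intro i j k hij hjk hk hkm
    exact hcv.slope_mono_adjacent
      ⟨ht0 i (hij.trans (hjk.trans hk)), le_of_lt (lt_of_lt_of_le (hts (hij.trans hjk) hk) hkm)⟩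
      ⟨le_trans (ht0 i (hij.trans (hjk.trans hk))) (le_of_lt (hts (hij.trans hjk) hk)), hkm⟩
      (hts hij (hjk.trans hk)) (hts hjk hk)
  · intro i j k hij hjk hk hmi
    exact hcc.slope_anti_adjacent
      ⟨hmi, le_trans (le_of_lt (hts (hij.trans hjk) hk)) (ht1 k hk)⟩
      ⟨le_trans hmi (le_of_lt (hts (hij.trans hjk) hk)), ht1 k hk⟩
      (hts hij (hjk.trans hk)) (hts hjk hk)
  · intro i j k hij hj hjm hk hmk
    refine le_trans (chord_le_fm hts ht0 ht1 hm0 hm1 hcv hcc hmo hij hj hjm) ?_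
    exact hmo hfm_mem (hmem k hk) hmk
  · intro i k l hi him hkl hl hmk
    refine le_trans ?_ (fm_le_chord hts ht0 ht1 hm0 hm1 hcv hcc hmo hkl hl hmk)
    exact hmo (hmem i hi) hfm_mem him
  · intro i j k l hij hj hjm hkl hl hmk
    exact le_trans (chord_le_fm hts ht0 ht1 hm0 hm1 hcv hcc hmo hij hj hjm)
      (fm_le_chord hts ht0 ht1 hm0 hm1 hcv hcc hmo hkl hl hmk)

end Forward

variable (t m n) in
noncomputable def Aset : Finset ℕ := (Finset.range n).filter (fun j => t j ≤ m)
variable (t m n) in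
noncomputable def Bset : Finset ℕ := (Finset.range n).filter (fun j => m ≤ t j)

variable (t m n) in
noncomputable def gline (v : ℕ → ℝ) (l : ℕ) (y : ℝ) : ℝ :=
  if l = 0 then v 0 else v (l-1) + sl t v (l-1) l * (y - t (l-1))

variable (t m n) in
noncomputable def hline (v : ℕ → ℝ) (l : ℕ) (y : ℝ) : ℝ :=
  if l + 1 < n then v l + sl t v l (l+1) * (y - t l) else v l

variable (t m n) in
noncomputable def gfun (v : ℕ → ℝ) (hA : (Aset t m n).Nonempty) (y : ℝ) : ℝ :=
  (Aset t m n).sup' hA (fun l => gline t v l y)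

variable (t m n) in
noncomputable def hfun (v : ℕ → ℝ) (hB : (Bset t m n).Nonempty) (y : ℝ) : ℝ :=
  (Bset t m n).inf' hB (fun l => hline t n v l y)

theorem mem_Aset {j : ℕ} : j ∈ Aset t m n ↔ j < n ∧ t j ≤ m := by
  simp [Aset]

theorem mem_Bset {j : ℕ} : j ∈ Bset t m n ↔ j < n ∧ m ≤ t j := by
  simp [Bset]

section Con

variable {v : ℕ → ℝ}
  (hts : ∀ ⦃j k⦄, j < k → k < n → t j < t k)
  (hP : P t m n v)

set_option linter.unusedSectionVars false

include hts

theorem Adown {i j : ℕ} (hij : i ≤ j) (hj : j ∈ Aset t m n) : i ∈ Aset t m n := by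
  rw [mem_Aset] at hj ⊢
  rcases eq_or_lt_of_le hij with rfl | h
  · exact hj
  · exact ⟨h.trans hj.1, le_of_lt (lt_of_lt_of_le (hts h hj.1) hj.2)⟩

theorem Bup {j k : ℕ} (hj : j ∈ Bset t m n) (hjk : j ≤ k) (hk : k < n) : k ∈ Bset t m n := by
  rw [mem_Bset] at hj ⊢
  rcases eq_or_lt_of_le hjk with rfl | h
  · exact hj
  · exact ⟨hk, le_trans hj.2 (le_of_lt (hts h hk))⟩

include hP

theorem gline_slope_nonneg {l : ℕ} (hl : l ∈ Aset t m n) (hl0 : l ≠ 0) :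
    0 ≤ sl t v (l-1) l := by
  have h1 : l - 1 < l := Nat.pred_lt hl0
  have hln : l < n := (mem_Aset.1 hl).1
  exact div_nonneg (sub_nonneg.2 (hP.1 (l-1) l (le_of_lt h1) hln))
    (sub_nonneg.2 (le_of_lt (hts h1 hln)))

theorem gline_mono {l : ℕ} (hl : l ∈ Aset t m n) : Monotone (gline t v l) := by
  intro y z hyz
  by_cases hl0 : l = 0
  · simp [gline, hl0]
  · have hs := gline_slope_nonneg hts hP hl hl0
    simp only [gline, if_neg hl0]
    have := mul_le_mul_of_nonneg_left (sub_le_sub_right hyz (t (l-1))) hs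
    linarith

theorem hline_slope_nonneg {l : ℕ} (hl : l ∈ Bset t m n) (hln : l + 1 < n) :
    0 ≤ sl t v l (l+1) :=
  div_nonneg (sub_nonneg.2 (hP.1 l (l+1) (Nat.le_succ l) hln))
    (sub_nonneg.2 (le_of_lt (hts (Nat.lt_succ_self l) hln)))

theorem hline_mono {l : ℕ} (hl : l ∈ Bset t m n) : Monotone (hline t n v l) := by
  intro y z hyz
  by_cases hln : l + 1 < n
  · have hs := hline_slope_nonneg hts hP hl hln
    simp only [hline, if_pos hln]
    have := mul_le_mul_of_nonneg_left (sub_le_sub_right hyz (t l)) hs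
    linarith
  · simp [hline, hln]

theorem gline_le {l j : ℕ} (hl : l ∈ Aset t m n) (hj : j ∈ Aset t m n) :
    gline t v l (t j) ≤ v j := by
  obtain ⟨hln, hlm⟩ := mem_Aset.1 hl
  obtain ⟨hjn, hjm⟩ := mem_Aset.1 hj
  by_cases hl0 : l = 0
  · simpa [gline, hl0] using hP.1 0 j (Nat.zero_le j) hjn
  · have hpl : l - 1 < l := Nat.pred_lt hl0
    have htpl : t (l-1) < t l := hts hpl hln
    simp only [gline, if_neg hl0]
    rcases lt_trichotomy j l with hjl | rfl | hlj
    · -- j ≤ l - 1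
      have hjpl : j ≤ l - 1 := by omega
      rcases eq_or_lt_of_le hjpl with rfl | hjlt
      · simp
      · have hs := hP.2.1 j (l-1) l hjlt hpl hln hlm
        have hneg : t j - t (l-1) ≤ 0 := sub_nonpos.2 (le_of_lt (hts hjlt (hpl.trans hln)))
        have h1 := mul_le_mul_of_nonpos_right hs hneg
        have h2 : sl t v j (l-1) * (t (l-1) - t j) = v (l-1) - v j :=
          sl_mul (hts hjlt (hpl.trans hln))
        nlinarith
    · linarith [sl_mul (v := v) htpl]
    · -- anchor at l, use slope (l-1,l) ≤ slope (l,j)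
      have hs := hP.2.1 (l-1) l j hpl hlj hjn hjm
      have hanchor := line_anchor (v := v) htpl (t j)
      have hpos : 0 ≤ t j - t l := sub_nonneg.2 (le_of_lt (hts hlj hjn))
      have h1 := mul_le_mul_of_nonneg_right hs hpos
      have h2 : sl t v l j * (t j - t l) = v j - v l := sl_mul (hts hlj hjn)
      -- sl in SShape vs SShape2 are syntactically the same definition
      nlinarith [hanchor]

theorem hline_ge {l j : ℕ} (hl : l ∈ Bset t m n) (hj : j ∈ Bset t m n) :
    v j ≤ hline t n v l (t j) := by
  obtain ⟨hln, hlm⟩ := mem_Bset.1 hl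
  obtain ⟨hjn, hjm⟩ := mem_Bset.1 hj
  by_cases hl1 : l + 1 < n
  · have htl : t l < t (l+1) := hts (Nat.lt_succ_self l) hl1
    simp only [hline, if_pos hl1]
    rcases lt_trichotomy j l with hjl | rfl | hlj
    · have hs := hP.2.2.1 j l (l+1) hjl (Nat.lt_succ_self l) hl1 hjm
      have hneg : t j - t l ≤ 0 := sub_nonpos.2 (le_of_lt (hts hjl hln))
      have h1 := mul_le_mul_of_nonpos_right hs hneg
      have h2 : sl t v j l * (t l - t j) = v l - v j := sl_mul (hts hjl hln)
      nlinarith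
    · simp
    · have hjl1 : l + 1 ≤ j := hlj
      rcases eq_or_lt_of_le hjl1 with rfl | hlt
      · linarith [sl_mul (v := v) htl]
      · have hs := hP.2.2.1 l (l+1) j (Nat.lt_succ_self l) hlt hjn hlm
        have hanchor := line_anchor (v := v) htl (t j)
        have hpos : 0 ≤ t j - t (l+1) := sub_nonneg.2 (le_of_lt (hts hlt hjn))
        have h1 := mul_le_mul_of_nonneg_right hs hpos
        have h2 : sl t v (l+1) j * (t j - t (l+1)) = v j - v (l+1) :=
          sl_mul (hts hlt hjn)
        nlinarith [hanchor]
  · simp only [hline, if_neg hl1]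
    exact hP.1 j l (by omega) hln

theorem gfun_interp (hA : (Aset t m n).Nonempty) {j : ℕ} (hj : j ∈ Aset t m n) :
    gfun t m n v hA (t j) = v j := by
  unfold gfun
  refine le_antisymm (Finset.sup'_le _ _ fun l hl => gline_le hts hP hl hj) ?_
  have hval : gline t v j (t j) = v j := by
    by_cases hj0 : j = 0
    · simp [gline, hj0]
    · have htpj : t (j-1) < t j := hts (Nat.pred_lt hj0) (mem_Aset.1 hj).1
      simp only [gline, if_neg hj0]
      linarith [sl_mul (v := v) htpj]
  calc v j = gline t v j (t j) := hval.symm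
    _ ≤ _ := Finset.le_sup' (fun l => gline t v l (t j)) hj

theorem hfun_interp (hB : (Bset t m n).Nonempty) {j : ℕ} (hj : j ∈ Bset t m n) :
    hfun t m n v hB (t j) = v j := by
  refine le_antisymm ?_ (Finset.le_inf' _ _ fun l hl => hline_ge hts hP hl hj)
  have hval : hline t n v j (t j) = v j := by
    by_cases hj1 : j + 1 < n
    · simp [hline, hj1]
    · simp [hline, hj1]
  calc hfun t m n v hB (t j) ≤ hline t n v j (t j) := Finset.inf'_le _ hj
    _ = v j := hval

theorem gfun_mono (hA : (Aset t m n).Nonempty) : Monotone (gfun t m n v hA) := by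
  intro y z hyz
  unfold gfun
  refine Finset.sup'_le _ _ fun l hl => ?_
  exact le_trans (gline_mono hts hP hl hyz) (Finset.le_sup' (fun l => gline t v l z) hl)

theorem hfun_mono (hB : (Bset t m n).Nonempty) : Monotone (hfun t m n v hB) := by
  intro y z hyz
  refine Finset.le_inf' _ _ fun l hl => ?_
  exact le_trans (Finset.inf'_le (fun l => hline t n v l y) hl) (hline_mono hts hP hl hyz)

omit hts hP in
theorem gline_affine {l : ℕ} {a b y z : ℝ} (hab : a + b = 1) :
    gline t v l (a * y + b * z) = a * gline t v l y + b * gline t v l z := by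
  by_cases hl0 : l = 0
  · simp only [gline, if_pos hl0]
    linear_combination (-(v 0)) * hab
  · simp only [gline, if_neg hl0]
    linear_combination (-(v (l-1) - sl t v (l-1) l * t (l-1))) * hab

omit hts hP in
theorem hline_affine {l : ℕ} {a b y z : ℝ} (hab : a + b = 1) :
    hline t n v l (a * y + b * z) = a * hline t n v l y + b * hline t n v l z := by
  by_cases hl1 : l + 1 < n
  · simp only [hline, if_pos hl1]
    linear_combination (-(v l - sl t v l (l+1) * t l)) * hab
  · simp only [hline, if_neg hl1]
    linear_combination (-(v l)) * hab

theorem gfun_convex (hA : (Aset t m n).Nonempty) : ConvexOn ℝ Set.univ (gfun t m n v hA) := by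
  refine ⟨convex_univ, fun y _ z _ a b ha hb hab => ?_⟩
  simp only [smul_eq_mul]
  unfold gfun
  refine Finset.sup'_le _ _ fun l hl => ?_
  rw [gline_affine (v := v) (l := l) (y := y) (z := z) hab]
  exact add_le_add (mul_le_mul_of_nonneg_left (Finset.le_sup' (fun l => gline t v l y) hl) ha)
    (mul_le_mul_of_nonneg_left (Finset.le_sup' (fun l => gline t v l z) hl) hb)

theorem hfun_concave (hB : (Bset t m n).Nonempty) : ConcaveOn ℝ Set.univ (hfun t m n v hB) := by
  refine ⟨convex_univ, fun y _ z _ a b ha hb hab => ?_⟩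
  simp only [smul_eq_mul]
  unfold hfun
  refine Finset.le_inf' _ _ fun l hl => ?_
  rw [hline_affine (v := v) (l := l) (y := y) (z := z) hab]
  exact add_le_add (mul_le_mul_of_nonneg_left (Finset.inf'_le (fun l => hline t n v l y) hl) ha)
    (mul_le_mul_of_nonneg_left (Finset.inf'_le (fun l => hline t n v l z) hl) hb)

theorem gm_le_hm (hA : (Aset t m n).Nonempty) (hB : (Bset t m n).Nonempty) :
    gfun t m n v hA m ≤ hfun t m n v hB m := by
  refine Finset.sup'_le _ _ fun lA hlA => Finset.le_inf' _ _ fun lB hlB => ?_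
  obtain ⟨hlAn, hlAm⟩ := mem_Aset.1 hlA
  obtain ⟨hlBn, hlBm⟩ := mem_Bset.1 hlB
  by_cases hA0 : lA = 0
  · by_cases hB1 : lB + 1 < n
    · -- v 0 ≤ ch v lB (lB+1)
      have h := hP.2.2.2.2.1 0 lB (lB+1) (by omega) (mem_Aset.1 (Adown hts (Nat.zero_le lA) hlA)).2
        (Nat.lt_succ_self lB) hB1 hlBm
      simpa [gline, hA0, hline, hB1, ch, ch, sl] using h
    · simp only [gline, if_pos hA0, hline, if_neg hB1]
      exact hP.1 0 lB (Nat.zero_le lB) hlBn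
  · have hpl : lA - 1 < lA := Nat.pred_lt hA0
    by_cases hB1 : lB + 1 < n
    · have h := hP.2.2.2.2.2 (lA-1) lA lB (lB+1) hpl hlAn hlAm
        (Nat.lt_succ_self lB) hB1 hlBm
      simpa [gline, hA0, hline, hB1, ch, ch, sl] using h
    · have h := hP.2.2.2.1 (lA-1) lA lB hpl hlAn hlAm hlBn hlBm
      simpa [gline, hA0, hline, hB1, ch, ch, sl] using h

end Con

section Glue

variable {g h : ℝ → ℝ}

theorem glue_convex (hgc : ConvexOn ℝ Set.univ g) (hhc : ConcaveOn ℝ Set.univ h)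
    (hgm : Monotone g) (hhm : Monotone h) (hgh : g m ≤ h m) :
    ConvexOn ℝ (Set.Icc 0 m) (fun y => if y < m then g y else h y) ∧
    ConcaveOn ℝ (Set.Icc m 1) (fun y => if y < m then g y else h y) ∧
    MonotoneOn (fun y => if y < m then g y else h y) (Set.Icc (0:ℝ) 1) := by
  set f : ℝ → ℝ := fun y => if y < m then g y else h y with hf
  have hfg : ∀ y, y ≤ m → g y ≤ f y := by
    intro y hy
    by_cases hym : y < m
    · simp [f, hym]
    · have : y = m := le_antisymm hy (not_lt.1 hym)
      subst this
      simpa [f, hym] using hgh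
  have hfm : f m = h m := by simp [f]
  refine ⟨⟨convex_Icc _ _, ?_⟩, ⟨convex_Icc _ _, ?_⟩, ?_⟩
  · intro p hp q hq a b ha hb hab
    simp only [smul_eq_mul]
    by_cases hc : a * p + b * q < m
    · have : f (a * p + b * q) = g (a * p + b * q) := by simp [f, hc]
      rw [this]
      refine le_trans ?_ (add_le_add (mul_le_mul_of_nonneg_left (hfg p hp.2) ha)
        (mul_le_mul_of_nonneg_left (hfg q hq.2) hb))
      simpa only [smul_eq_mul] using hgc.2 (Set.mem_univ p) (Set.mem_univ q) ha hb hab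
    · have hcm : a * p + b * q = m := by
        refine le_antisymm ?_ (not_lt.1 hc)
        calc a * p + b * q ≤ a * m + b * m :=
          add_le_add (mul_le_mul_of_nonneg_left hp.2 ha) (mul_le_mul_of_nonneg_left hq.2 hb)
        _ = m := by rw [← add_mul, hab, one_mul]
      have hfc : f (a * p + b * q) = h m := by rw [hcm, hfm]
      rw [hfc]
      have hzero : a * (m - p) + b * (m - q) = 0 := by linear_combination m * hab - hcm
      have h1 : a * (m - p) = 0 ∧ b * (m - q) = 0 := by
        constructor <;> nlinarith [mul_nonneg ha (sub_nonneg.2 hp.2), mul_nonneg hb (sub_nonneg.2 hq.2)]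
      rcases mul_eq_zero.1 h1.1 with ha0 | hp0
      · have hb1 : b = 1 := by linarith
        rcases mul_eq_zero.1 h1.2 with hb0 | hq0
        · exfalso; linarith
        · have : q = m := by linarith
          rw [this, hfm, ha0, hb1]; ring_nf; exact le_refl _
      · have hpm : p = m := by linarith
        rcases mul_eq_zero.1 h1.2 with hb0 | hq0
        · have ha1 : a = 1 := by linarith
          rw [hpm, hfm, hb0, ha1]; ring_nf; exact le_refl _
        · have hqm : q = m := by linarith
          rw [hpm, hqm, hfm, ← add_mul, hab, one_mul]
  · intro p hp q hq a b ha hb hab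
    simp only [smul_eq_mul]
    have hcm : m ≤ a * p + b * q := by
      calc m = a * m + b * m := by rw [← add_mul, hab, one_mul]
      _ ≤ a * p + b * q :=
        add_le_add (mul_le_mul_of_nonneg_left hp.1 ha) (mul_le_mul_of_nonneg_left hq.1 hb)
    have e1 : f (a * p + b * q) = h (a * p + b * q) := by simp [f, not_lt.2 hcm]
    have e2 : f p = h p := by simp [f, not_lt.2 hp.1]
    have e3 : f q = h q := by simp [f, not_lt.2 hq.1]
    rw [e1, e2, e3]
    simpa only [smul_eq_mul] using hhc.2 (Set.mem_univ p) (Set.mem_univ q) ha hb hab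
  · intro p hp q hq hpq
    by_cases hpm : p < m
    · by_cases hqm : q < m
      · simpa [f, hpm, hqm] using hgm hpq
      · have : f p = g p := by simp [f, hpm]
        rw [this]
        have : f q = h q := by simp [f, hqm]
        rw [this]
        calc g p ≤ g m := hgm (le_of_lt hpm)
        _ ≤ h m := hgh
        _ ≤ h q := hhm (not_lt.1 hqm)
    · have hqm : ¬ q < m := fun hq' => hpm (lt_of_le_of_lt hpq hq')
      simpa [f, hpm, hqm] using hhm hpq

end Glue

section BackMain

variable {v : ℕ → ℝ}
  (hts : ∀ ⦃j k⦄, j < k → k < n → t j < t k)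

include hts

theorem backward (hP : P t m n v) :
    ∃ f : ℝ → ℝ, (ConvexOn ℝ (Set.Icc 0 m) f ∧ ConcaveOn ℝ (Set.Icc m 1) f ∧
      MonotoneOn f (Set.Icc (0:ℝ) 1)) ∧ ∀ j, j < n → f (t j) = v j := by
  by_cases hA : (Aset t m n).Nonempty
  · by_cases hB : (Bset t m n).Nonempty
    · refine ⟨fun y => if y < m then gfun t m n v hA y else hfun t m n v hB y,
        glue_convex (gfun_convex hts hP hA) (hfun_concave hts hP hB)
          (gfun_mono hts hP hA) (hfun_mono hts hP hB) (gm_le_hm hts hP hA hB), ?_⟩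
      intro j hj
      dsimp only
      by_cases hjm : t j < m
      · rw [if_pos hjm]
        exact gfun_interp hts hP hA (mem_Aset.2 ⟨hj, le_of_lt hjm⟩)
      · rw [if_neg hjm]
        exact hfun_interp hts hP hB (mem_Bset.2 ⟨hj, not_lt.1 hjm⟩)
    · refine ⟨fun y => if y < m then gfun t m n v hA y else gfun t m n v hA m,
        glue_convex (gfun_convex hts hP hA) (concaveOn_const _ convex_univ)
          (gfun_mono hts hP hA) monotone_const (le_refl _), ?_⟩
      intro j hj
      dsimp only
      by_cases hjm : t j < m
      · rw [if_pos hjm]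
        exact gfun_interp hts hP hA (mem_Aset.2 ⟨hj, le_of_lt hjm⟩)
      · exact absurd ⟨j, mem_Bset.2 ⟨hj, not_lt.1 hjm⟩⟩ hB
  · by_cases hB : (Bset t m n).Nonempty
    · refine ⟨fun y => if y < m then hfun t m n v hB m else hfun t m n v hB y,
        glue_convex (convexOn_const _ convex_univ) (hfun_concave hts hP hB)
          monotone_const (hfun_mono hts hP hB) (le_refl _), ?_⟩
      intro j hj
      dsimp only
      by_cases hjm : t j < m
      · exact absurd ⟨j, mem_Aset.2 ⟨hj, le_of_lt hjm⟩⟩ hA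
      · rw [if_neg hjm]
        exact hfun_interp hts hP hB (mem_Bset.2 ⟨hj, not_lt.1 hjm⟩)
    · refine ⟨fun _ => 0, ⟨convexOn_const _ (convex_Icc _ _),
        concaveOn_const _ (convex_Icc _ _), monotoneOn_const⟩, ?_⟩
      intro j hj
      rcases le_total (t j) m with hjm | hjm
      · exact absurd ⟨j, mem_Aset.2 ⟨hj, hjm⟩⟩ hA
      · exact absurd ⟨j, mem_Bset.2 ⟨hj, hjm⟩⟩ hB

end BackMain

section Topology

theorem sl_congr {v v' : ℕ → ℝ} {i j : ℕ} (hi : v i = v' i) (hj : v j = v' j) :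
    sl t v i j = sl t v' i j := by
  unfold sl; rw [hi, hj]

theorem ch_congr {v v' : ℕ → ℝ} {i j : ℕ} (hi : v i = v' i) (hj : v j = v' j) :
    ch t m v i j = ch t m v' i j := by
  unfold ch; rw [hi, sl_congr hi hj]

theorem P_congr {v v' : ℕ → ℝ} (hv : ∀ j, j < n → v j = v' j) (hP : P t m n v) :
    P t m n v' := by
  obtain ⟨h1, h2, h3, h4, h5, h6⟩ := hP
  refine ⟨?_, ?_, ?_, ?_, ?_, ?_⟩
  · intro j k hjk hk
    rw [← hv j (lt_of_le_of_lt hjk hk), ← hv k hk]; exact h1 j k hjk hk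
  · intro i j k hij hjk hk hkm
    rw [← sl_congr (hv i (by omega)) (hv j (by omega)),
      ← sl_congr (hv j (by omega)) (hv k hk)]
    exact h2 i j k hij hjk hk hkm
  · intro i j k hij hjk hk hmi
    rw [← sl_congr (hv j (by omega)) (hv k hk),
      ← sl_congr (hv i (by omega)) (hv j (by omega))]
    exact h3 i j k hij hjk hk hmi
  · intro i j k hij hj hjm hk hmk
    rw [← ch_congr (hv i (by omega)) (hv j hj), ← hv k hk]
    exact h4 i j k hij hj hjm hk hmk
  · intro i k l hi him hkl hl hmk
    rw [← hv i hi, ← ch_congr (hv k (by omega)) (hv l hl)]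
    exact h5 i k l hi him hkl hl hmk
  · intro i j k l hij hj hjm hkl hl hmk
    rw [← ch_congr (hv i (by omega)) (hv j hj), ← ch_congr (hv k (by omega)) (hv l hl)]
    exact h6 i j k l hij hj hjm hkl hl hmk

variable (n) in
noncomputable def ext (w : EuclideanSpace ℝ (Fin n)) : ℕ → ℝ :=
  fun j => if h : j < n then w ⟨j, h⟩ else 0

theorem ext_cont (j : ℕ) : Continuous fun w : EuclideanSpace ℝ (Fin n) => ext n w j := by
  by_cases h : j < n
  · simp only [ext, dif_pos h]
    exact (continuous_apply (⟨j, h⟩ : Fin n)).comp (PiLp.continuous_ofLp 2 _)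
  · simp only [ext, dif_neg h]
    exact continuous_const

theorem isClosed_guard {X : Type*} [TopologicalSpace X] {ι : Sort*} {Q : ι → Prop}
    {F G : ι → X → ℝ} (hF : ∀ i, Continuous (F i)) (hG : ∀ i, Continuous (G i)) :
    IsClosed {w : X | ∀ i, Q i → F i w ≤ G i w} := by
  have heq : {w : X | ∀ i, Q i → F i w ≤ G i w} = ⋂ i, {w | Q i → F i w ≤ G i w} := by
    ext w; simp [Set.mem_iInter]
  rw [heq]
  refine isClosed_iInter fun i => ?_
  by_cases hq : Q i
  · have heq2 : {w : X | Q i → F i w ≤ G i w} = {w | F i w ≤ G i w} := by ext w; simp [hq]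
    rw [heq2]; exact isClosed_le (hF i) (hG i)
  · have heq2 : {w : X | Q i → F i w ≤ G i w} = Set.univ := by ext w; simp [hq]
    rw [heq2]; exact isClosed_univ

theorem isClosed_P : IsClosed {w : EuclideanSpace ℝ (Fin n) | P t m n (ext n w)} := by
  have hext : ∀ j, Continuous fun w : EuclideanSpace ℝ (Fin n) => ext n w j := ext_cont
  have hsl : ∀ i j, Continuous fun w : EuclideanSpace ℝ (Fin n) => sl t (ext n w) i j :=
    fun i j => Continuous.div_const ((hext j).sub (hext i)) _
  have hch : ∀ i j, Continuous fun w : EuclideanSpace ℝ (Fin n) => ch t m (ext n w) i j :=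
    fun i j => (hext i).add ((hsl i j).mul continuous_const)
  have c1 : IsClosed {w : EuclideanSpace ℝ (Fin n) |
      ∀ q : ℕ × ℕ, (q.1 ≤ q.2 ∧ q.2 < n) → ext n w q.1 ≤ ext n w q.2} :=
    isClosed_guard (fun q => hext q.1) (fun q => hext q.2)
  have c2 : IsClosed {w : EuclideanSpace ℝ (Fin n) |
      ∀ q : ℕ × ℕ × ℕ, (q.1 < q.2.1 ∧ q.2.1 < q.2.2 ∧ q.2.2 < n ∧ t q.2.2 ≤ m) →
        sl t (ext n w) q.1 q.2.1 ≤ sl t (ext n w) q.2.1 q.2.2} :=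
    isClosed_guard (fun q => hsl q.1 q.2.1) (fun q => hsl q.2.1 q.2.2)
  have c3 : IsClosed {w : EuclideanSpace ℝ (Fin n) |
      ∀ q : ℕ × ℕ × ℕ, (q.1 < q.2.1 ∧ q.2.1 < q.2.2 ∧ q.2.2 < n ∧ m ≤ t q.1) →
        sl t (ext n w) q.2.1 q.2.2 ≤ sl t (ext n w) q.1 q.2.1} :=
    isClosed_guard (fun q => hsl q.2.1 q.2.2) (fun q => hsl q.1 q.2.1)
  have c4 : IsClosed {w : EuclideanSpace ℝ (Fin n) |
      ∀ q : ℕ × ℕ × ℕ, (q.1 < q.2.1 ∧ q.2.1 < n ∧ t q.2.1 ≤ m ∧ q.2.2 < n ∧ m ≤ t q.2.2) →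
        ch t m (ext n w) q.1 q.2.1 ≤ ext n w q.2.2} :=
    isClosed_guard (fun q => hch q.1 q.2.1) (fun q => hext q.2.2)
  have c5 : IsClosed {w : EuclideanSpace ℝ (Fin n) |
      ∀ q : ℕ × ℕ × ℕ, (q.1 < n ∧ t q.1 ≤ m ∧ q.2.1 < q.2.2 ∧ q.2.2 < n ∧ m ≤ t q.2.1) →
        ext n w q.1 ≤ ch t m (ext n w) q.2.1 q.2.2} :=
    isClosed_guard (fun q => hext q.1) (fun q => hch q.2.1 q.2.2)
  have c6 : IsClosed {w : EuclideanSpace ℝ (Fin n) |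
      ∀ q : ℕ × ℕ × ℕ × ℕ, (q.1 < q.2.1 ∧ q.2.1 < n ∧ t q.2.1 ≤ m ∧ q.2.2.1 < q.2.2.2 ∧
          q.2.2.2 < n ∧ m ≤ t q.2.2.1) →
        ch t m (ext n w) q.1 q.2.1 ≤ ch t m (ext n w) q.2.2.1 q.2.2.2} :=
    isClosed_guard (fun q => hch q.1 q.2.1) (fun q => hch q.2.2.1 q.2.2.2)
  have heq : ∀ w : EuclideanSpace ℝ (Fin n), P t m n (ext n w) ↔
      ((∀ q : ℕ × ℕ, (q.1 ≤ q.2 ∧ q.2 < n) → ext n w q.1 ≤ ext n w q.2) ∧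
       (∀ q : ℕ × ℕ × ℕ, (q.1 < q.2.1 ∧ q.2.1 < q.2.2 ∧ q.2.2 < n ∧ t q.2.2 ≤ m) →
         sl t (ext n w) q.1 q.2.1 ≤ sl t (ext n w) q.2.1 q.2.2) ∧
       (∀ q : ℕ × ℕ × ℕ, (q.1 < q.2.1 ∧ q.2.1 < q.2.2 ∧ q.2.2 < n ∧ m ≤ t q.1) →
         sl t (ext n w) q.2.1 q.2.2 ≤ sl t (ext n w) q.1 q.2.1) ∧
       (∀ q : ℕ × ℕ × ℕ, (q.1 < q.2.1 ∧ q.2.1 < n ∧ t q.2.1 ≤ m ∧ q.2.2 < n ∧ m ≤ t q.2.2) →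
         ch t m (ext n w) q.1 q.2.1 ≤ ext n w q.2.2) ∧
       (∀ q : ℕ × ℕ × ℕ, (q.1 < n ∧ t q.1 ≤ m ∧ q.2.1 < q.2.2 ∧ q.2.2 < n ∧ m ≤ t q.2.1) →
         ext n w q.1 ≤ ch t m (ext n w) q.2.1 q.2.2) ∧
       (∀ q : ℕ × ℕ × ℕ × ℕ, (q.1 < q.2.1 ∧ q.2.1 < n ∧ t q.2.1 ≤ m ∧ q.2.2.1 < q.2.2.2 ∧
           q.2.2.2 < n ∧ m ≤ t q.2.2.1) →
         ch t m (ext n w) q.1 q.2.1 ≤ ch t m (ext n w) q.2.2.1 q.2.2.2)) :=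
    fun w => ⟨fun h => ⟨fun q hq => h.1 q.1 q.2 hq.1 hq.2,
        fun q hq => h.2.1 q.1 q.2.1 q.2.2 hq.1 hq.2.1 hq.2.2.1 hq.2.2.2,
        fun q hq => h.2.2.1 q.1 q.2.1 q.2.2 hq.1 hq.2.1 hq.2.2.1 hq.2.2.2,
        fun q hq => h.2.2.2.1 q.1 q.2.1 q.2.2 hq.1 hq.2.1 hq.2.2.1 hq.2.2.2.1 hq.2.2.2.2,
        fun q hq => h.2.2.2.2.1 q.1 q.2.1 q.2.2 hq.1 hq.2.1 hq.2.2.1 hq.2.2.2.1 hq.2.2.2.2,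
        fun q hq => h.2.2.2.2.2 q.1 q.2.1 q.2.2.1 q.2.2.2 hq.1 hq.2.1 hq.2.2.1 hq.2.2.2.1
          hq.2.2.2.2.1 hq.2.2.2.2.2⟩,
      fun h => ⟨fun j k hjk hk => h.1 (j, k) ⟨hjk, hk⟩,
        fun i j k h1 h2 h3 h4 => h.2.1 (i, j, k) ⟨h1, h2, h3, h4⟩,
        fun i j k h1 h2 h3 h4 => h.2.2.1 (i, j, k) ⟨h1, h2, h3, h4⟩,
        fun i j k h1 h2 h3 h4 h5 => h.2.2.2.1 (i, j, k) ⟨h1, h2, h3, h4, h5⟩,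
        fun i k l h1 h2 h3 h4 h5 => h.2.2.2.2.1 (i, k, l) ⟨h1, h2, h3, h4, h5⟩,
        fun i j k l h1 h2 h3 h4 h5 h6 =>
          h.2.2.2.2.2 (i, j, k, l) ⟨h1, h2, h3, h4, h5, h6⟩⟩⟩
  have hseteq : {w : EuclideanSpace ℝ (Fin n) | P t m n (ext n w)} =
      _ ∩ (_ ∩ (_ ∩ (_ ∩ (_ ∩ _)))) := Set.ext heq
  rw [hseteq]
  exact c1.inter (c2.inter (c3.inter (c4.inter (c5.inter c6))))

end Topology

theorem Fm_comb {f g : ℝ → ℝ}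
    (hf : ConvexOn ℝ (Set.Icc 0 m) f ∧ ConcaveOn ℝ (Set.Icc m 1) f ∧
      MonotoneOn f (Set.Icc (0:ℝ) 1))
    (hg : ConvexOn ℝ (Set.Icc 0 m) g ∧ ConcaveOn ℝ (Set.Icc m 1) g ∧
      MonotoneOn g (Set.Icc (0:ℝ) 1))
    {a b : ℝ} (ha : 0 ≤ a) (hb : 0 ≤ b) :
    ConvexOn ℝ (Set.Icc 0 m) (fun y => a * f y + b * g y) ∧
    ConcaveOn ℝ (Set.Icc m 1) (fun y => a * f y + b * g y) ∧
    MonotoneOn (fun y => a * f y + b * g y) (Set.Icc (0:ℝ) 1) := by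
  refine ⟨?_, ?_, ?_⟩
  · exact (hf.1.smul ha).add (hg.1.smul hb)
  · exact (hf.2.1.smul ha).add (hg.2.1.smul hb)
  · intro p hp q hq hpq
    exact add_le_add (mul_le_mul_of_nonneg_left (hf.2.2 hp hq hpq) ha)
      (mul_le_mul_of_nonneg_left (hg.2.2 hp hq hpq) hb)

end SShape

/-- Existence of an S-shaped least squares estimator with prescribed inflection
point `m`, and its uniqueness at the design points. -/
theorem stmt2 (n : ℕ) (x Y : ℕ → ℝ)
    (hx : ∀ i, 1 ≤ i → i < n → x i < x (i + 1))
    (hx0 : 0 ≤ x 1) (hx1 : x n ≤ 1)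
    (m : ℝ) (hm : m ∈ Set.Icc (0 : ℝ) 1) :
    let Fm : (ℝ → ℝ) → Prop := fun f =>
      ConvexOn ℝ (Set.Icc 0 m) f ∧ ConcaveOn ℝ (Set.Icc m 1) f ∧
        MonotoneOn f (Set.Icc (0 : ℝ) 1)
    let S : (ℝ → ℝ) → ℝ := fun f => ∑ i ∈ Finset.Icc 1 n, (Y i - f (x i)) ^ 2
    (∃ f, Fm f ∧ ∀ g, Fm g → S f ≤ S g) ∧
    (∀ f g, Fm f → Fm g → (∀ h, Fm h → S f ≤ S h) → (∀ h, Fm h → S g ≤ S h) →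
      ∀ i ∈ Finset.Icc 1 n, f (x i) = g (x i)) := by
  intro Fm S
  obtain ⟨hm0, hm1⟩ := hm
  set t : ℕ → ℝ := fun j => x (j + 1) with ht
  have hts : ∀ ⦃j k : ℕ⦄, j < k → k < n → t j < t k := by
    intro j k hjk hk
    induction k with
    | zero => omega
    | succ k ih =>
      rcases Nat.lt_succ_iff_lt_or_eq.1 hjk with h | rfl
      · exact lt_trans (ih h (by omega)) (hx (k + 1) (by omega) (by omega))
      · exact hx (j + 1) (by omega) (by omega)
  have htle : ∀ ⦃j k : ℕ⦄, j ≤ k → k < n → t j ≤ t k := by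
    intro j k hjk hk
    rcases eq_or_lt_of_le hjk with rfl | h
    · exact le_refl _
    · exact le_of_lt (hts h hk)
  have ht0 : ∀ j, j < n → 0 ≤ t j := fun j hj =>
    le_trans hx0 (htle (Nat.zero_le j) hj)
  have ht1 : ∀ j, j < n → t j ≤ 1 := by
    intro j hj
    have h1 : t j ≤ t (n - 1) := htle (by omega) (by omega)
    have h2 : t (n - 1) = x n := by
      show x (n - 1 + 1) = x n
      congr 1
      omega
    rw [h2] at h1
    exact le_trans h1 hx1
  -- sum reindexing
  have hS : ∀ f : ℝ → ℝ, S f = ∑ j : Fin n, (Y ((j : ℕ) + 1) - f (t j)) ^ 2 := by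
    intro f
    show (∑ i ∈ Finset.Icc 1 n, (Y i - f (x i)) ^ 2) = _
    rw [← Finset.Ico_add_one_right_eq_Icc, Finset.sum_Ico_eq_sum_range,
      show n + 1 - 1 = n from rfl, Finset.sum_range]
    exact Finset.sum_congr rfl fun j _ => by rw [add_comm 1 (j : ℕ)]
  constructor
  · -- existence
    set u : EuclideanSpace ℝ (Fin n) := WithLp.toLp 2 (fun j => Y ((j : ℕ) + 1)) with hu
    set K : Set (EuclideanSpace ℝ (Fin n)) :=
      {w | ∃ f, Fm f ∧ ∀ j : Fin n, w j = f (t j)} with hK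
    have hnorm : ∀ (f : ℝ → ℝ) (w : EuclideanSpace ℝ (Fin n)),
        (∀ j : Fin n, w j = f (t j)) → S f = ‖u - w‖ ^ 2 := by
      intro f w hw
      rw [hS f, EuclideanSpace.norm_eq, Real.sq_sqrt (by positivity)]
      refine Finset.sum_congr rfl fun j _ => ?_
      rw [show (u - w) j = u j - w j by simp, hw j]
      simp only [Real.norm_eq_abs, sq_abs, hu, PiLp.toLp_apply]
    have hKQ : K = {w : EuclideanSpace ℝ (Fin n) | SShape.P t m n (SShape.ext n w)} := by
      ext w
      constructor
      · rintro ⟨f, hf, hw⟩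
        refine SShape.P_congr (fun j hj => ?_) (SShape.forward hts ht0 ht1 hm0 hm1 hf.1 hf.2.1 hf.2.2)
        show f (t j) = SShape.ext n w j
        rw [SShape.ext, dif_pos hj, hw ⟨j, hj⟩]
      · intro hw
        obtain ⟨f, hfm, hint⟩ := SShape.backward hts hw
        refine ⟨f, hfm, fun j => ?_⟩
        have h := hint j.1 j.2
        rw [SShape.ext, dif_pos j.2] at h
        exact h.symm
    have hKne : K.Nonempty := by
      refine ⟨(0 : EuclideanSpace ℝ (Fin n)), ⟨fun _ => 0,
        ⟨convexOn_const _ (convex_Icc _ _), concaveOn_const _ (convex_Icc _ _),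
          monotoneOn_const⟩, fun j => ?_⟩⟩
      simp
    have hKcl : IsClosed K := by rw [hKQ]; exact SShape.isClosed_P
    have hKcv : Convex ℝ K := by
      rintro w1 ⟨f1, hf1, hw1⟩ w2 ⟨f2, hf2, hw2⟩ a b ha hb hab
      refine ⟨fun y => a * f1 y + b * f2 y, SShape.Fm_comb hf1 hf2 ha hb, fun j => ?_⟩
      show (a • w1 + b • w2) j = _
      simp [hw1 j, hw2 j]
    obtain ⟨w, hwK, hwmin⟩ :=
      exists_norm_eq_iInf_of_complete_convex hKne hKcl.isComplete hKcv u
    have hle : ∀ w' ∈ K, ‖u - w‖ ≤ ‖u - w'‖ := by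
      intro w' hw'
      rw [hwmin]
      exact ciInf_le ⟨0, Set.forall_mem_range.2 fun _ => norm_nonneg _⟩ (⟨w', hw'⟩ : K)
    obtain ⟨f₀, hf₀, hwval⟩ := hwK
    refine ⟨f₀, hf₀, fun g hg => ?_⟩
    have h1 : S f₀ = ‖u - w‖ ^ 2 := hnorm f₀ w hwval
    have h2 : S g = ‖u - (WithLp.toLp 2 (fun j => g (t j)) : EuclideanSpace ℝ (Fin n))‖ ^ 2 :=
      hnorm g _ fun j => rfl
    rw [h1, h2]
    exact pow_le_pow_left₀ (norm_nonneg _)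
      (hle _ ⟨g, hg, fun j => rfl⟩) 2
  · -- uniqueness at design points
    intro f g hf hg hminf hming i hi
    set h2 : ℝ → ℝ := fun y => (1/2 : ℝ) * f y + (1/2 : ℝ) * g y with hh2
    have hFmh : Fm h2 := SShape.Fm_comb hf hg (by norm_num) (by norm_num)
    have hfg : S f = S g := le_antisymm (hminf g hg) (hming f hf)
    have hsum : S h2 + ∑ i ∈ Finset.Icc 1 n, ((f (x i) - g (x i)) / 2) ^ 2
        = (S f + S g) / 2 := by
      show (∑ i ∈ Finset.Icc 1 n, (Y i - h2 (x i)) ^ 2) + _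
          = ((∑ i ∈ Finset.Icc 1 n, (Y i - f (x i)) ^ 2) +
             (∑ i ∈ Finset.Icc 1 n, (Y i - g (x i)) ^ 2)) / 2
      rw [← Finset.sum_add_distrib, ← Finset.sum_add_distrib, Finset.sum_div]
      refine Finset.sum_congr rfl fun i _ => ?_
      simp only [hh2]
      ring
    have hmin : S f ≤ S h2 := hminf h2 hFmh
    have hD : ∑ i ∈ Finset.Icc 1 n, ((f (x i) - g (x i)) / 2) ^ 2 ≤ 0 := by linarith
    have hD0 : ∑ i ∈ Finset.Icc 1 n, ((f (x i) - g (x i)) / 2) ^ 2 = 0 :=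
      le_antisymm hD (Finset.sum_nonneg fun i _ => sq_nonneg _)
    have hterm := (Finset.sum_eq_zero_iff_of_nonneg
      (fun i _ => sq_nonneg ((f (x i) - g (x i)) / 2))).1 hD0 i hi
    have := pow_eq_zero_iff (n := 2) (by norm_num) |>.1 hterm
    have h3 : f (x i) - g (x i) = 0 := by
      field_simp at this
      linarith
    linarith
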